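/- The growth rate of every subword-closed language exists and is integral: if Σ is a finite alphabet and L ⊆ Σ* is a subword-closed language, then there is a natural number d such that lim_{n→∞} |L_n|^{1/n} exists and equals d. -/

import Mathlib

open Filter Finset

namespace SubwordGrowth

variable {A : Type} [DecidableEq A]

/-- All words of length `n` over the alphabet `B`. -/
def allW (B : Finset A) : ℕ → Finset (List A)
  | 0 => {[]}
  | n+1 => (B ×ˢ allW B n).image (fun p => p.1 :: p.2)

lemma mem_allW (B : Finset A) : ∀ (n : ℕ) (w : List A),
    w ∈ allW B n ↔ (w.length = n ∧ ∀ a ∈ w, a ∈ B) := by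
  intro n
  induction n with
  | zero =>
    intro w
    simp only [allW, Finset.mem_singleton, List.length_eq_zero_iff]
    constructor
    · rintro rfl; simp
    · rintro ⟨rfl, _⟩; rfl
  | succ n ih =>
    intro w
    simp only [allW, Finset.mem_image, Finset.mem_product]
    constructor
    · rintro ⟨⟨a, v⟩, ⟨ha, hv⟩, rfl⟩
      obtain ⟨h1, h2⟩ := (ih v).1 hv
      simp_all [List.length_cons]
    · rintro ⟨h1, h2⟩
      cases w with
      | nil => simp at h1
      | cons a v =>
        refine ⟨(a, v), ⟨⟨h2 a (by simp), ?_⟩, rfl⟩⟩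
        exact (ih v).2 ⟨by simpa using h1, fun x hx => h2 x (by simp [hx])⟩

lemma card_allW (B : Finset A) : ∀ n : ℕ, (allW B n).card = B.card ^ n := by
  intro n
  induction n with
  | zero => simp [allW]
  | succ n ih =>
    have hinj : Function.Injective (fun p : A × List A => p.1 :: p.2) := by
      rintro ⟨a, v⟩ ⟨b, u⟩ h
      simp_all
    rw [allW, Finset.card_image_of_injective _ hinj, Finset.card_product, ih]
    ring

/-- The length of the longest prefix of `w` with at most `d` distinct letters. -/
def segLen (d : ℕ) (w : List A) : ℕ :=
  Nat.findGreatest (fun j => ((w.take j).toFinset.card ≤ d)) w.length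

lemma segLen_le (d : ℕ) (w : List A) : segLen d w ≤ w.length :=
  Nat.findGreatest_le _

lemma segLen_spec (d : ℕ) (w : List A) : (w.take (segLen d w)).toFinset.card ≤ d :=
  Nat.findGreatest_spec (P := fun j => ((w.take j).toFinset.card ≤ d)) (Nat.zero_le _) (by simp)

lemma segLen_eq_of_card_le {d : ℕ} {w : List A} (h : w.toFinset.card ≤ d) :
    segLen d w = w.length :=
  le_antisymm (segLen_le d w)
    (Nat.le_findGreatest le_rfl (by simpa using h))

lemma segLen_succ_card {d : ℕ} {w : List A} (h : segLen d w < w.length) :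
    d + 1 ≤ (w.take (segLen d w + 1)).toFinset.card := by
  have := Nat.findGreatest_is_greatest (P := fun j => ((w.take j).toFinset.card ≤ d))
    (n := w.length) (k := segLen d w + 1) (by exact Nat.lt_succ_self _) h
  omega

/-- Number of boundaries in the canonical decomposition of `w` into maximal
segments with at most `d` distinct letters. -/
def nb (d : ℕ) (w : List A) : ℕ :=
  match h : w.drop (segLen d w) with
  | [] => 0
  | _ :: rest => nb d rest + 1
termination_by w.length
decreasing_by
  have := congrArg List.length h
  simp only [List.length_drop, List.length_cons] at this
  omega

lemma nb_of_drop_nil {d : ℕ} {w : List A} (h : w.drop (segLen d w) = []) :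
    nb d w = 0 := by
  rw [nb]; split <;> simp_all

lemma nb_of_drop_cons {d : ℕ} {w : List A} {a : A} {rest : List A}
    (h : w.drop (segLen d w) = a :: rest) : nb d w = nb d rest + 1 := by
  rw [nb]
  split
  · simp_all
  · rename_i a' rest' h'
    rw [h] at h'
    cases h'
    rfl

lemma nb_eq_zero_of_card_le {d : ℕ} {w : List A} (h : w.toFinset.card ≤ d) :
    nb d w = 0 :=
  nb_of_drop_nil (by rw [segLen_eq_of_card_le h, List.drop_length])

lemma card_le_of_nb_eq_zero {d : ℕ} {w : List A} (h : nb d w = 0) :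
    w.toFinset.card ≤ d := by
  rcases hdr : w.drop (segLen d w) with _ | ⟨a, rest⟩
  · have : segLen d w = w.length := by
      have := congrArg List.length hdr
      simp only [List.length_drop, List.length_nil] at this
      have := segLen_le d w
      omega
    have h2 := segLen_spec d w
    rwa [this, List.take_length] at h2
  · rw [nb_of_drop_cons hdr] at h; omega

lemma nb_zero_eq_length_aux : ∀ (n : ℕ) (w : List A), w.length = n → nb 0 w = w.length := by
  intro n
  induction n using Nat.strong_induction_on with
  | _ n ih =>
  intro w hn
  cases w with
  | nil => exact nb_of_drop_nil (by simp)
  | cons a t =>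
    have hseg : segLen 0 (a :: t) = 0 := by
      by_contra h
      have h1 : 1 ≤ segLen 0 (a :: t) := Nat.one_le_iff_ne_zero.2 h
      have := segLen_spec 0 (a :: t)
      have htake : a ∈ ((a :: t).take (segLen 0 (a :: t))) := by
        cases hs : segLen 0 (a :: t) with
        | zero => omega
        | succ k => simp
      have : ((a :: t).take (segLen 0 (a :: t))).toFinset.card ≥ 1 := by
        apply Finset.card_pos.2
        exact ⟨a, by simpa using htake⟩
      omega
    have hdrop : (a :: t).drop (segLen 0 (a :: t)) = a :: t := by rw [hseg]; rfl
    rw [nb_of_drop_cons hdrop]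
    rw [ih t.length (by simp [← hn]) t rfl]
    simp

lemma nb_zero_eq_length (w : List A) : nb 0 w = w.length :=
  nb_zero_eq_length_aux w.length w rfl


/-- How much of the *tail* of `u` embeds as a subword of `w`. -/
def qq (u w : List A) : ℕ :=
  Nat.findGreatest (fun j => (u.drop (u.length - j)).Sublist w) u.length

lemma qq_le (u w : List A) : qq u w ≤ u.length := Nat.findGreatest_le _

lemma qq_spec (u w : List A) : (u.drop (u.length - qq u w)).Sublist w :=
  Nat.findGreatest_spec (P := fun j => (u.drop (u.length - j)).Sublist w)
    (Nat.zero_le _) (by simp)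

lemma qq_mono {v w : List A} (u : List A) (h : v.Sublist w) : qq u v ≤ qq u w :=
  Nat.findGreatest_mono (fun _ hj => hj.trans h) le_rfl

lemma qq_lt {u w : List A} (h : ¬ u.Sublist w) : qq u w < u.length := by
  rcases Nat.lt_or_ge (qq u w) u.length with h1 | h1
  · exact h1
  · exfalso
    have h2 := qq_spec u w
    have : u.length - qq u w = 0 := by omega
    rw [this, List.drop_zero] at h2
    exact h h2

lemma qq_step {u v rest : List A} {a : A}
    (hu : ¬ u.Sublist (v ++ a :: rest)) (hmem : ∀ x ∈ u, x ∈ v ++ [a]) :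
    qq u rest < qq u (v ++ a :: rest) := by
  have hrw : rest.Sublist (v ++ a :: rest) :=
    List.sublist_append_of_sublist_right (List.sublist_cons_self a rest)
  have hj : qq u rest < u.length := lt_of_le_of_lt (qq_mono u hrw) (qq_lt hu)
  set j := qq u rest with hjdef
  have key : (u.drop (u.length - (j + 1))).Sublist (v ++ a :: rest) := by
    have hx : u.length - (j + 1) < u.length := by omega
    rw [List.drop_eq_getElem_cons hx]
    have he : u.length - (j + 1) + 1 = u.length - j := by omega
    rw [he]
    obtain ⟨s, t, hst⟩ := List.append_of_mem (hmem _ (List.getElem_mem hx))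
    have htail : (u.drop (u.length - j)).Sublist (t ++ rest) :=
      List.sublist_append_of_sublist_right (qq_spec u rest)
    have hw : v ++ a :: rest = s ++ (u[u.length - (j+1)] :: (t ++ rest)) := by
      have : v ++ a :: rest = (v ++ [a]) ++ rest := by simp
      rw [this, hst]
      simp
    rw [hw]
    exact List.sublist_append_of_sublist_right (htail.cons₂ _)
  have := Nat.le_findGreatest (P := fun j => (u.drop (u.length - j)).Sublist (v ++ a :: rest))
    (by omega : j + 1 ≤ u.length) key
  unfold qq
  omega

lemma nb_le_sum [Fintype A] {d : ℕ} (u : Finset A → List A)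
    (hu1 : ∀ C ∈ Finset.powersetCard (d+1) (Finset.univ : Finset A), ∀ x ∈ u C, x ∈ C) :
    ∀ (n : ℕ) (w : List A), w.length ≤ n →
      (∀ C ∈ Finset.powersetCard (d+1) (Finset.univ : Finset A), ¬ (u C).Sublist w) →
      nb d w ≤ ∑ C ∈ Finset.powersetCard (d+1) (Finset.univ : Finset A), qq (u C) w := by
  set S := Finset.powersetCard (d+1) (Finset.univ : Finset A) with hSdef
  intro n
  induction n with
  | zero =>
    intro w hw _
    have : w = [] := List.length_eq_zero_iff.1 (Nat.le_zero.1 hw)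
    subst this
    have h0 : nb d ([] : List A) = 0 := nb_of_drop_nil (w := ([] : List A)) (by simp)
    simp [h0]
  | succ n ih =>
    intro w hw havoid
    rcases h : w.drop (segLen d w) with _ | ⟨a, rest⟩
    · simp [nb_of_drop_nil h]
    · have hsl : segLen d w < w.length := by
        by_contra hc
        have : segLen d w = w.length := le_antisymm (segLen_le d w) (by omega)
        rw [this, List.drop_length] at h
        cases h
      set v := w.take (segLen d w) with hvdef
      have hwsplit : w = v ++ a :: rest := by
        conv_lhs => rw [← List.take_append_drop (segLen d w) w]
        rw [h]
      have htake1 : w.take (segLen d w + 1) = v ++ [a] := by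
        rw [List.take_add (l := w) (i := segLen d w) (j := 1), h]
        rfl
      have hcard : d + 1 ≤ (v ++ [a]).toFinset.card := by
        rw [← htake1]; exact segLen_succ_card hsl
      obtain ⟨C₀, hC₀sub, hC₀card⟩ :=
        Finset.exists_subset_card_eq hcard
      have hC₀S : C₀ ∈ S := by
        rw [hSdef, Finset.mem_powersetCard]
        exact ⟨Finset.subset_univ _, hC₀card⟩
      have hrest_sub : rest.Sublist w := by
        rw [hwsplit]
        exact List.sublist_append_of_sublist_right (List.sublist_cons_self a rest)
      have hrest_len : rest.length ≤ n := by
        have := congrArg List.length hwsplit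
        simp only [List.length_append, List.length_cons] at this
        omega
      have hrest_avoid : ∀ C ∈ S, ¬ (u C).Sublist rest := fun C hC hsub =>
        havoid C hC (hsub.trans hrest_sub)
      have hIH := ih rest hrest_len hrest_avoid
      have hlt : ∑ C ∈ S, qq (u C) rest < ∑ C ∈ S, qq (u C) w := by
        apply Finset.sum_lt_sum
        · exact fun C _ => qq_mono (u C) hrest_sub
        · refine ⟨C₀, hC₀S, ?_⟩
          have hmem : ∀ x ∈ u C₀, x ∈ v ++ [a] := fun x hx =>
            List.mem_toFinset.1 (hC₀sub (hu1 C₀ hC₀S x hx))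
          have := qq_step (u := u C₀) (v := v) (rest := rest) (a := a)
            (by rw [← hwsplit]; exact havoid C₀ hC₀S) hmem
          calc qq (u C₀) rest < qq (u C₀) (v ++ a :: rest) := this
            _ = qq (u C₀) w := by rw [← hwsplit]
      rw [nb_of_drop_cons h]
      omega

lemma nb_le_M [Fintype A] {d : ℕ} (u : Finset A → List A)
    (hu1 : ∀ C ∈ Finset.powersetCard (d+1) (Finset.univ : Finset A), ∀ x ∈ u C, x ∈ C)
    (w : List A)
    (havoid : ∀ C ∈ Finset.powersetCard (d+1) (Finset.univ : Finset A), ¬ (u C).Sublist w) :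
    nb d w ≤ ∑ C ∈ Finset.powersetCard (d+1) (Finset.univ : Finset A), (u C).length :=
  (nb_le_sum u hu1 w.length w le_rfl havoid).trans
    (Finset.sum_le_sum fun C _ => qq_le _ _)

section Count
variable [Fintype A]

lemma choose_le_two_pow (s d : ℕ) (h : d ≤ s) : s.choose d ≤ 2 ^ s := by
  rw [← Nat.sum_range_choose s]
  exact Finset.single_le_sum (fun i _ => Nat.zero_le _) (Finset.mem_range.2 (by omega))

lemma card_filter_small (d n : ℕ) (hds : d ≤ Fintype.card A) :
    (((allW (univ : Finset A) n)).filter (fun w => w.toFinset.card ≤ d)).card ≤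
      2 ^ (Fintype.card A) * d ^ n := by
  have hsub : (((allW (univ : Finset A) n)).filter (fun w => w.toFinset.card ≤ d)) ⊆
      (Finset.powersetCard d (univ : Finset A)).biUnion (fun B => allW B n) := by
    intro w hw
    rw [Finset.mem_filter] at hw
    obtain ⟨B, hB, hBcard⟩ := Finset.exists_superset_card_eq hw.2 hds
    refine Finset.mem_biUnion.2 ⟨B, Finset.mem_powersetCard.2 ⟨Finset.subset_univ _, hBcard⟩, ?_⟩
    exact (mem_allW _ _ _).2 ⟨((mem_allW _ _ _).1 hw.1).1,
      fun a ha => hB (List.mem_toFinset.2 ha)⟩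
  calc (((allW (univ : Finset A) n)).filter (fun w => w.toFinset.card ≤ d)).card
      ≤ ((Finset.powersetCard d (univ : Finset A)).biUnion (fun B => allW B n)).card :=
        Finset.card_le_card hsub
    _ ≤ ∑ B ∈ Finset.powersetCard d (univ : Finset A), (allW B n).card :=
        Finset.card_biUnion_le
    _ = ∑ B ∈ Finset.powersetCard d (univ : Finset A), d ^ n := by
        apply Finset.sum_congr rfl
        intro B hB
        rw [card_allW, (Finset.mem_powersetCard.1 hB).2]
    _ = (Fintype.card A).choose d * d ^ n := by
        rw [Finset.sum_const, Finset.card_powersetCard, Finset.card_univ, smul_eq_mul]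
    _ ≤ 2 ^ (Fintype.card A) * d ^ n :=
        Nat.mul_le_mul_right _ (choose_le_two_pow _ _ hds)

lemma count_nb (d : ℕ) (hd : 1 ≤ d) (hds : d ≤ Fintype.card A) :
    ∀ (k n : ℕ), (((allW (univ : Finset A) n)).filter (fun w => nb d w ≤ k)).card ≤
      (2 ^ Fintype.card A) ^ (k + 1) * (Fintype.card A) ^ k * (n + 1) ^ k * d ^ n := by
  have hs1 : 1 ≤ Fintype.card A := le_trans hd hds
  intro k
  induction k with
  | zero =>
    intro n
    have hsub : ((allW (univ : Finset A) n)).filter (fun w => nb d w ≤ 0) ⊆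
        ((allW (univ : Finset A) n)).filter (fun w => w.toFinset.card ≤ d) := by
      intro w hw
      rw [Finset.mem_filter] at hw ⊢
      exact ⟨hw.1, card_le_of_nb_eq_zero (Nat.le_zero.1 hw.2)⟩
    calc _ ≤ _ := Finset.card_le_card hsub
      _ ≤ 2 ^ (Fintype.card A) * d ^ n := card_filter_small d n hds
      _ = (2 ^ Fintype.card A) ^ (0 + 1) * (Fintype.card A) ^ 0 * (n + 1) ^ 0 * d ^ n := by ring
  | succ k ih =>
    intro n
    set s := Fintype.card A with hsdef
    set Dset : ℕ → Finset (List A) :=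
      fun m => ((allW (univ : Finset A) m)).filter (fun v => v.toFinset.card ≤ d) with hD
    set T : ℕ → Finset (List A) := fun ℓ =>
      ((Dset ℓ) ×ˢ (univ : Finset A) ×ˢ
        ((allW (univ : Finset A) (n - ℓ - 1)).filter (fun w => nb d w ≤ k))).image
        (fun p : List A × A × List A => p.1 ++ p.2.1 :: p.2.2) with hT
    have hsub : ((allW (univ : Finset A) n)).filter (fun w => nb d w ≤ k + 1) ⊆
        Dset n ∪ (Finset.range n).biUnion T := by
      intro w hw
      rw [Finset.mem_filter] at hw
      obtain ⟨hwall, hnb⟩ := hw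
      have hwlen : w.length = n := ((mem_allW _ _ _).1 hwall).1
      rcases h : w.drop (segLen d w) with _ | ⟨a, rest⟩
      · exact Finset.mem_union_left _
          (Finset.mem_filter.2 ⟨hwall, card_le_of_nb_eq_zero (nb_of_drop_nil h)⟩)
      · have hwsplit : w = w.take (segLen d w) ++ a :: rest := by
          conv_lhs => rw [← List.take_append_drop (segLen d w) w]
          rw [h]
        have hlen : (w.take (segLen d w)).length + rest.length + 1 = n := by
          have := congrArg List.length hwsplit
          simp only [List.length_append, List.length_cons] at this
          omega
        apply Finset.mem_union_right
        apply Finset.mem_biUnion.2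
        refine ⟨(w.take (segLen d w)).length, Finset.mem_range.2 (by omega), ?_⟩
        apply Finset.mem_image.2
        refine ⟨(w.take (segLen d w), a, rest), ?_, hwsplit.symm⟩
        rw [Finset.mem_product]
        refine ⟨Finset.mem_filter.2 ⟨(mem_allW _ _ _).2 ⟨rfl, by simp⟩, segLen_spec d w⟩, ?_⟩
        rw [Finset.mem_product]
        refine ⟨Finset.mem_univ a, ?_⟩
        have hnbr : nb d rest ≤ k := by
          rw [nb_of_drop_cons h] at hnb
          omega
        exact Finset.mem_filter.2 ⟨(mem_allW _ _ _).2 ⟨by simp only; omega, by simp⟩, hnbr⟩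
    have hQ : ∀ ℓ ∈ Finset.range n, (T ℓ).card ≤
        (2 ^ s) ^ (k + 2) * s ^ (k + 1) * (n + 1) ^ k * d ^ (n - 1) := by
      intro ℓ hℓ
      have hℓn : ℓ < n := Finset.mem_range.1 hℓ
      have h1 : (T ℓ).card ≤ (2 ^ s * d ^ ℓ) * (s *
          ((2 ^ s) ^ (k + 1) * s ^ k * (n - ℓ - 1 + 1) ^ k * d ^ (n - ℓ - 1))) := by
        calc (T ℓ).card ≤ _ := Finset.card_image_le
          _ = (Dset ℓ).card * (s *
              ((allW (univ : Finset A) (n - ℓ - 1)).filter (fun w => nb d w ≤ k)).card) := by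
            rw [Finset.card_product, Finset.card_product, Finset.card_univ]
          _ ≤ _ := by
            refine Nat.mul_le_mul (card_filter_small d ℓ hds)
              (Nat.mul_le_mul_left _ (ih (n - ℓ - 1)))
      refine h1.trans ?_
      have hde : d ^ ℓ * d ^ (n - ℓ - 1) = d ^ (n - 1) := by
        rw [← pow_add]
        congr 1
        omega
      have hnl : (n - ℓ - 1 + 1) ^ k ≤ (n + 1) ^ k :=
        Nat.pow_le_pow_left (by omega) k
      calc (2 ^ s * d ^ ℓ) * (s * ((2 ^ s) ^ (k + 1) * s ^ k * (n - ℓ - 1 + 1) ^ k * d ^ (n - ℓ - 1)))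
          = (2 ^ s) ^ (k + 2) * s ^ (k + 1) * (n - ℓ - 1 + 1) ^ k * (d ^ ℓ * d ^ (n - ℓ - 1)) := by
            ring
        _ = (2 ^ s) ^ (k + 2) * s ^ (k + 1) * (n - ℓ - 1 + 1) ^ k * d ^ (n - 1) := by rw [hde]
        _ ≤ (2 ^ s) ^ (k + 2) * s ^ (k + 1) * (n + 1) ^ k * d ^ (n - 1) := by
            exact Nat.mul_le_mul_right _ (Nat.mul_le_mul_left _ hnl)
    have hbig : ((allW (univ : Finset A) n).filter (fun w => nb d w ≤ k + 1)).card ≤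
        2 ^ s * d ^ n + n * ((2 ^ s) ^ (k + 2) * s ^ (k + 1) * (n + 1) ^ k * d ^ (n - 1)) := by
      calc ((allW (univ : Finset A) n).filter (fun w => nb d w ≤ k + 1)).card
          ≤ (Dset n ∪ (Finset.range n).biUnion T).card := Finset.card_le_card hsub
        _ ≤ (Dset n).card + ((Finset.range n).biUnion T).card := Finset.card_union_le _ _
        _ ≤ (Dset n).card + ∑ ℓ ∈ Finset.range n, (T ℓ).card :=
            Nat.add_le_add_left Finset.card_biUnion_le _
        _ ≤ 2 ^ s * d ^ n + ∑ ℓ ∈ Finset.range n,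
              ((2 ^ s) ^ (k + 2) * s ^ (k + 1) * (n + 1) ^ k * d ^ (n - 1)) :=
            Nat.add_le_add (card_filter_small d n hds) (Finset.sum_le_sum hQ)
        _ = 2 ^ s * d ^ n + n * ((2 ^ s) ^ (k + 2) * s ^ (k + 1) * (n + 1) ^ k * d ^ (n - 1)) := by
            rw [Finset.sum_const, Finset.card_range, smul_eq_mul]
    refine hbig.trans ?_
    have hdd : d ^ (n - 1) ≤ d ^ n := Nat.pow_le_pow_right hd (by omega)
    have h2s : 2 ^ s ≤ (2 ^ s) ^ (k + 2) * s ^ (k + 1) * (n + 1) ^ k := by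
      calc 2 ^ s = (2 ^ s) ^ 1 * 1 * 1 := by ring
        _ ≤ (2 ^ s) ^ (k + 2) * s ^ (k + 1) * (n + 1) ^ k := by
            refine Nat.mul_le_mul (Nat.mul_le_mul ?_ ?_) ?_
            · exact Nat.pow_le_pow_right (Nat.one_le_two_pow) (by omega)
            · exact Nat.one_le_pow _ _ (by omega)
            · exact Nat.one_le_pow _ _ (by omega)
    calc 2 ^ s * d ^ n + n * ((2 ^ s) ^ (k + 2) * s ^ (k + 1) * (n + 1) ^ k * d ^ (n - 1))
        ≤ ((2 ^ s) ^ (k + 2) * s ^ (k + 1) * (n + 1) ^ k) * d ^ n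
          + n * ((2 ^ s) ^ (k + 2) * s ^ (k + 1) * (n + 1) ^ k * d ^ n) := by
          exact Nat.add_le_add (Nat.mul_le_mul_right _ h2s)
            (Nat.mul_le_mul_left _ (Nat.mul_le_mul_left _ hdd))
      _ = (2 ^ s) ^ (k + 2) * s ^ (k + 1) * ((n + 1) ^ k * (n + 1)) * d ^ n := by ring
      _ = (2 ^ s) ^ (k + 1 + 1) * s ^ (k + 1) * (n + 1) ^ (k + 1) * d ^ n := by
          rw [← pow_succ]
end Count


/-- `c ^ (1/n) → 1` for a positive natural constant `c`. -/
lemma tendsto_const_rpow_inv (c : ℕ) (hc : 0 < c) :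
    Tendsto (fun n : ℕ => (c : ℝ) ^ ((n : ℝ)⁻¹)) atTop (nhds 1) := by
  have hc' : (0 : ℝ) < (c : ℝ) := by exact_mod_cast hc
  have h1 : Tendsto (fun n : ℕ => Real.log c * (n : ℝ)⁻¹) atTop (nhds 0) := by
    simpa using tendsto_inv_atTop_nhds_zero_nat.const_mul (Real.log c)
  have h2 : Tendsto (fun n : ℕ => Real.exp (Real.log c * (n : ℝ)⁻¹)) atTop (nhds 1) := by
    simpa [Function.comp_def] using (Real.continuous_exp.tendsto 0).comp h1
  refine h2.congr fun n => ?_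
  rw [Real.rpow_def_of_pos hc']

lemma tendsto_log_succ_div : Tendsto (fun n : ℕ => Real.log ((n : ℝ) + 1) / (n : ℝ))
    atTop (nhds 0) := by
  have T1 : Tendsto (fun n : ℕ => Real.log ((n : ℝ) + 1) / ((n : ℝ) + 1)) atTop (nhds 0) := by
    have hdiv : Tendsto (fun x : ℝ => Real.log x / x) atTop (nhds 0) := by
      simpa [Function.comp] using Real.isLittleO_log_id_atTop.tendsto_div_nhds_zero
    exact hdiv.comp (tendsto_atTop_add_const_right atTop 1 tendsto_natCast_atTop_atTop)
  have T2 : Tendsto (fun n : ℕ => ((n : ℝ) + 1) / (n : ℝ)) atTop (nhds 1) := by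
    have : Tendsto (fun n : ℕ => 1 + ((n : ℝ))⁻¹) atTop (nhds 1) := by
      simpa using tendsto_const_nhds.add (tendsto_inv_atTop_nhds_zero_nat (𝕜 := ℝ))
    refine this.congr' ?_
    filter_upwards [eventually_ge_atTop 1] with n hn
    have hn' : (n : ℝ) ≠ 0 := by
      have : (0:ℝ) < (n:ℝ) := by exact_mod_cast hn
      exact this.ne'
    field_simp
  have := T1.mul T2
  rw [zero_mul] at this
  refine this.congr' ?_
  filter_upwards [eventually_ge_atTop 1] with n hn
  have hn' : (n : ℝ) ≠ 0 := by
    have : (0 : ℝ) < (n : ℝ) := by exact_mod_cast hn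
    exact this.ne'
  have hn1 : (n : ℝ) + 1 ≠ 0 := by positivity
  field_simp

/-- `((n+1)^M) ^ (1/n) → 1`. -/
lemma tendsto_poly_rpow_inv (M : ℕ) :
    Tendsto (fun n : ℕ => (((n : ℝ) + 1) ^ M) ^ ((n : ℝ)⁻¹)) atTop (nhds 1) := by
  have h1 : Tendsto (fun n : ℕ => (M : ℝ) * (Real.log ((n : ℝ) + 1) / (n : ℝ)))
      atTop (nhds 0) := by
    simpa using tendsto_log_succ_div.const_mul (M : ℝ)
  have h2 : Tendsto (fun n : ℕ => Real.exp ((M : ℝ) * (Real.log ((n : ℝ) + 1) / (n : ℝ))))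
      atTop (nhds 1) := by
    simpa [Function.comp_def] using (Real.continuous_exp.tendsto 0).comp h1
  refine h2.congr fun n => ?_
  have hpos : (0 : ℝ) < ((n : ℝ) + 1) ^ M := by positivity
  rw [Real.rpow_def_of_pos hpos, Real.log_pow]
  congr 1
  ring


end SubwordGrowth


theorem subword_closed_growth_rate_integral
    {A : Type} [Fintype A] (L : Set (List A))
    (hL : ∀ w ∈ L, ∀ v : List A, v.Sublist w → v ∈ L) :
    ∃ d : ℕ, Tendsto
      (fun n : ℕ => (Set.ncard {w ∈ L | w.length = n} : ℝ) ^ ((n : ℝ)⁻¹))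
      atTop (nhds (d : ℝ)) := by
  classical
  open SubwordGrowth in
  by_cases hLe : L = ∅
  · refine ⟨0, ?_⟩
    have hev : ∀ᶠ n : ℕ in atTop,
        (0 : ℝ) = (Set.ncard {w ∈ L | w.length = n} : ℝ) ^ ((n : ℝ)⁻¹) := by
      filter_upwards [eventually_ge_atTop 1] with n hn
      have h1 : {w ∈ L | w.length = n} = ∅ := by simp [hLe]
      have hn0 : ((n : ℝ))⁻¹ ≠ 0 := by
        refine inv_ne_zero ?_
        exact_mod_cast Nat.one_le_iff_ne_zero.1 hn
      rw [h1]
      simp [Real.zero_rpow hn0]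
    simpa using Tendsto.congr' hev tendsto_const_nhds
  · -- L is nonempty
    obtain ⟨w₀, hw₀⟩ := Set.nonempty_iff_ne_empty.2 hLe
    have hnil : [] ∈ L := hL w₀ hw₀ [] (List.nil_sublist _)
    set P : Finset A → Prop := fun B => ∀ w : List A, (∀ a ∈ w, a ∈ B) → w ∈ L with hP
    set F : Finset (Finset A) := Finset.univ.filter P with hF
    have hFne : F.Nonempty := by
      refine ⟨∅, ?_⟩
      rw [hF, Finset.mem_filter]
      refine ⟨Finset.mem_univ _, fun w hw => ?_⟩
      have : w = [] := List.eq_nil_iff_forall_not_mem.2 (fun a ha => by simpa using hw a ha)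
      rwa [this]
    set d : ℕ := F.sup Finset.card with hd
    obtain ⟨B₀, hB₀F, hB₀⟩ := Finset.exists_mem_eq_sup F hFne Finset.card
    have hPB₀ : P B₀ := (Finset.mem_filter.1 hB₀F).2
    have hd_max : ∀ C : Finset A, C.card = d + 1 → ¬ P C := by
      intro C hC hPC
      have : C ∈ F := Finset.mem_filter.2 ⟨Finset.mem_univ _, hPC⟩
      have := Finset.le_sup (f := Finset.card) this
      omega
    have hds : d ≤ Fintype.card A := by
      rw [hd, hB₀]
      simpa using Finset.card_le_univ B₀
    -- choose forbidden words
    have hU : ∀ C : Finset A, ∃ v : List A, (∀ x ∈ v, x ∈ C) ∧ (C.card = d + 1 → v ∉ L) := by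
      intro C
      by_cases hC : C.card = d + 1
      · have h2 : ¬ ∀ w : List A, (∀ a ∈ w, a ∈ C) → w ∈ L := hd_max C hC
        push_neg at h2
        obtain ⟨v, hv1, hv2⟩ := h2
        exact ⟨v, hv1, fun _ => hv2⟩
      · exact ⟨[], by simp, fun h => absurd h hC⟩
    choose u hu1 hu2 using hU
    set S : Finset (Finset A) := Finset.powersetCard (d + 1) (Finset.univ : Finset A) with hS
    set M : ℕ := ∑ C ∈ S, (u C).length with hM
    have havoid : ∀ w ∈ L, ∀ C ∈ S, ¬ (u C).Sublist w := by
      intro w hw C hC hsub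
      exact hu2 C (Finset.mem_powersetCard.1 hC).2 (hL w hw _ hsub)
    have hnb : ∀ w ∈ L, nb d w ≤ M := by
      intro w hw
      exact nb_le_M u (fun C _ => hu1 C) w (havoid w hw)
    -- counting function
    set cnt : ℕ → ℕ := fun n => ((allW (Finset.univ : Finset A) n).filter (fun w => w ∈ L)).card
      with hcnt
    have hset : ∀ n : ℕ, (Set.ncard {w ∈ L | w.length = n}) = cnt n := by
      intro n
      have : {w ∈ L | w.length = n} =
          (((allW (Finset.univ : Finset A) n).filter (fun w => w ∈ L)) : Set (List A)) := by
        ext w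
        simp only [Set.mem_setOf_eq, Finset.coe_filter, mem_allW, Finset.mem_univ]
        tauto
      rw [this, Set.ncard_coe_finset]
    by_cases hd0 : d = 0
    · -- L is finite: all words have length ≤ M
      refine ⟨0, ?_⟩
      have hev : ∀ᶠ n : ℕ in atTop,
          (0 : ℝ) = (Set.ncard {w ∈ L | w.length = n} : ℝ) ^ ((n : ℝ)⁻¹) := by
        filter_upwards [eventually_ge_atTop (M + 1)] with n hn
        have h1 : {w ∈ L | w.length = n} = ∅ := by
          ext w
          simp only [Set.mem_setOf_eq, Set.mem_empty_iff_false, iff_false, not_and]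
          intro hw hlen
          have := hnb w hw
          rw [hd0] at this
          rw [nb_zero_eq_length] at this
          omega
        have hn0 : ((n : ℝ))⁻¹ ≠ 0 := by
          refine inv_ne_zero ?_
          have : 0 < n := by omega
          exact_mod_cast this.ne'
        rw [h1]
        simp [Real.zero_rpow hn0]
      simpa using Tendsto.congr' hev tendsto_const_nhds
    · -- main case: d ≥ 1
      have hd1 : 1 ≤ d := Nat.one_le_iff_ne_zero.2 hd0
      set s : ℕ := Fintype.card A with hsdef
      set c : ℕ := (2 ^ s) ^ (M + 1) * s ^ M with hc
      have hs1 : 1 ≤ s := le_trans hd1 hds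
      have hc_pos : 0 < c := by
        have h1 : 0 < (2 ^ s) ^ (M + 1) := by positivity
        have h2 : 0 < s ^ M := Nat.pow_pos (by omega)
        rw [hc]
        exact Nat.mul_pos h1 h2
      -- upper bound
      have hupper : ∀ n : ℕ, cnt n ≤ c * (n + 1) ^ M * d ^ n := by
        intro n
        have hsub : (allW (Finset.univ : Finset A) n).filter (fun w => w ∈ L) ⊆
            (allW (Finset.univ : Finset A) n).filter (fun w => nb d w ≤ M) := by
          intro w hw
          rw [Finset.mem_filter] at hw ⊢
          exact ⟨hw.1, hnb w hw.2⟩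
        calc cnt n ≤ _ := Finset.card_le_card hsub
          _ ≤ (2 ^ s) ^ (M + 1) * s ^ M * (n + 1) ^ M * d ^ n := count_nb d hd1 hds M n
          _ = c * (n + 1) ^ M * d ^ n := by rw [hc]
      -- lower bound
      have hlower : ∀ n : ℕ, d ^ n ≤ cnt n := by
        intro n
        have hsub : allW B₀ n ⊆ (allW (Finset.univ : Finset A) n).filter (fun w => w ∈ L) := by
          intro w hw
          obtain ⟨h1, h2⟩ := (mem_allW _ _ _).1 hw
          refine Finset.mem_filter.2 ⟨(mem_allW _ _ _).2 ⟨h1, fun a _ => Finset.mem_univ a⟩, ?_⟩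
          exact hPB₀ w h2
        calc d ^ n = B₀.card ^ n := by rw [hd, hB₀]
          _ = (allW B₀ n).card := (card_allW B₀ n).symm
          _ ≤ cnt n := Finset.card_le_card hsub
      refine ⟨d, ?_⟩
      have hfun : ∀ n : ℕ, (Set.ncard {w ∈ L | w.length = n} : ℝ) ^ ((n : ℝ)⁻¹)
          = ((cnt n : ℝ)) ^ ((n : ℝ)⁻¹) := by
        intro n
        rw [hset n]
      simp only [hfun]
      -- squeeze
      have hdpos : (0 : ℝ) < (d : ℝ) := by exact_mod_cast hd1
      have key_pow : ∀ n : ℕ, 1 ≤ n → (((d : ℝ) ^ n) : ℝ) ^ ((n : ℝ)⁻¹) = (d : ℝ) := by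
        intro n hn
        have hn0 : (n : ℝ) ≠ 0 := by
          have : 0 < n := hn
          exact_mod_cast this.ne'
        rw [← Real.rpow_natCast (d : ℝ) n, ← Real.rpow_mul hdpos.le,
          mul_inv_cancel₀ hn0, Real.rpow_one]
      have hlow' : ∀ᶠ n : ℕ in atTop, (d : ℝ) ≤ ((cnt n : ℝ)) ^ ((n : ℝ)⁻¹) := by
        filter_upwards [eventually_ge_atTop 1] with n hn
        have h1 : ((d : ℝ) ^ n) ≤ (cnt n : ℝ) := by exact_mod_cast hlower n
        calc (d : ℝ) = (((d : ℝ) ^ n) : ℝ) ^ ((n : ℝ)⁻¹) := (key_pow n hn).symm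
          _ ≤ ((cnt n : ℝ)) ^ ((n : ℝ)⁻¹) :=
            Real.rpow_le_rpow (by positivity) h1 (by positivity)
      set h : ℕ → ℝ := fun n =>
        ((c : ℝ)) ^ ((n : ℝ)⁻¹) * (((n : ℝ) + 1) ^ M) ^ ((n : ℝ)⁻¹) * (d : ℝ) with hh
      have hup' : ∀ᶠ n : ℕ in atTop, ((cnt n : ℝ)) ^ ((n : ℝ)⁻¹) ≤ h n := by
        filter_upwards [eventually_ge_atTop 1] with n hn
        have h1 : (cnt n : ℝ) ≤ (c : ℝ) * ((n : ℝ) + 1) ^ M * (d : ℝ) ^ n := by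
          have := hupper n
          push_cast
          exact_mod_cast this
        calc ((cnt n : ℝ)) ^ ((n : ℝ)⁻¹)
            ≤ ((c : ℝ) * ((n : ℝ) + 1) ^ M * (d : ℝ) ^ n) ^ ((n : ℝ)⁻¹) :=
              Real.rpow_le_rpow (by positivity) h1 (by positivity)
          _ = ((c : ℝ)) ^ ((n : ℝ)⁻¹) * (((n : ℝ) + 1) ^ M) ^ ((n : ℝ)⁻¹)
              * (((d : ℝ) ^ n)) ^ ((n : ℝ)⁻¹) := by
              rw [Real.mul_rpow (by positivity) (by positivity),
                Real.mul_rpow (by positivity) (by positivity)]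
          _ = h n := by rw [hh, key_pow n hn]
      have hhl : Tendsto h atTop (nhds (d : ℝ)) := by
        have := (tendsto_const_rpow_inv c hc_pos).mul (tendsto_poly_rpow_inv M)
        have := this.mul_const (d : ℝ)
        simpa using this
      exact tendsto_of_tendsto_of_tendsto_of_le_of_le' tendsto_const_nhds hhl hlow' hup'
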